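/- For every integer t ≥ 2, the center of n_{2,t} equals the t-th term of the lower central series of n_{2,t} (its last nonzero term). -/

import Mathlib

noncomputable section

/-- The free Lie algebra over `ℂ` on two generators. -/
abbrev FL : Type := FreeLieAlgebra ℂ (Fin 2)

/-- The ideal `L^{t+1}` of the free Lie algebra `L = FL`. -/
def nIdeal (t : ℕ) : LieIdeal ℂ FL := LieModule.lowerCentralSeries ℂ FL FL t

/-- The free `t`-step nilpotent complex Lie algebra on two generators. -/
abbrev n2 (t : ℕ) : Type := FL ⧸ nIdeal t

namespace N2Aux

abbrev A : Type := MonoidAlgebra ℂ (FreeMonoid (Fin 2))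

attribute [local instance 100] LieRing.ofAssociativeRing

def gen (i : Fin 2) : FL := FreeLieAlgebra.of ℂ i

def φ : FL →ₗ⁅ℂ⁆ A :=
  FreeLieAlgebra.lift ℂ (fun i => MonoidAlgebra.single (FreeMonoid.of i) 1)

def θword : List (Fin 2) → FL
  | [] => 0
  | [i] => gen i
  | i :: j :: u => ⁅gen i, θword (j :: u)⁆

def θ : A →ₗ[ℂ] FL :=
  (Finsupp.lsum ℂ fun w => LinearMap.toSpanSingleton ℂ FL (θword (FreeMonoid.toList w))) ∘ₗ
    (MonoidAlgebra.coeffLinearEquiv ℂ).toLinearMap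

@[simp] lemma θ_single (w : FreeMonoid (Fin 2)) (c : ℂ) :
    θ (MonoidAlgebra.single w c) = c • θword (FreeMonoid.toList w) :=
  Finsupp.lsum_single ℂ _ _ _

@[simp] lemma φ_gen (i : Fin 2) : φ (gen i) = MonoidAlgebra.single (FreeMonoid.of i) 1 := by
  simp [φ, gen, FreeLieAlgebra.lift_of_apply]

lemma of_mul_ne_one (x : Fin 2) (xs : FreeMonoid (Fin 2)) : FreeMonoid.of x * xs ≠ 1 := by
  intro h
  have := congrArg FreeMonoid.length h
  simp [FreeMonoid.length_mul] at this

/-- Generator-wise key identity for `θ`. -/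
lemma theta_single_mul (i : Fin 2) (p : A) :
    θ (MonoidAlgebra.single (FreeMonoid.of i) 1 * p) = ⁅gen i, θ p⁆ + (p.coeff 1) • gen i := by
  induction p using MonoidAlgebra.induction_linear with
  | zero => simp
  | add p q hp hq =>
      rw [mul_add, map_add, hp, hq]
      simp [mul_add, add_smul]
      abel
  | single w c =>
      rw [MonoidAlgebra.single_mul_single, θ_single, θ_single]
      cases w using FreeMonoid.casesOn with
      | one => simp [Finsupp.single_apply, θword, FreeMonoid.toList_of_mul]
      | of_mul x xs =>
          rw [MonoidAlgebra.coeff_single, Finsupp.single_eq_of_ne' (of_mul_ne_one x xs)]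
          have : FreeMonoid.toList (FreeMonoid.of i * (FreeMonoid.of x * xs)) =
              i :: x :: FreeMonoid.toList xs := rfl
          rw [this]
          simp [θword]


lemma coeff_one_mul (a p : A) : (a * p).coeff 1 = a.coeff 1 * p.coeff 1 := by
  induction a using MonoidAlgebra.induction_linear with
  | zero => simp
  | add a b ha hb =>
      rw [add_mul, MonoidAlgebra.coeff_add, MonoidAlgebra.coeff_add, Finsupp.add_apply,
        Finsupp.add_apply, ha, hb, add_mul]
  | single w c =>
      by_cases hw : w = 1
      · subst hw
        rw [MonoidAlgebra.single_one_mul_apply]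
        simp
      · rw [MonoidAlgebra.single_mul_apply_of_not_exists_mul]
        · rw [MonoidAlgebra.coeff_single, Finsupp.single_eq_of_ne' hw]; simp
        · rintro ⟨d, hd⟩
          have := congrArg FreeMonoid.length hd
          rw [FreeMonoid.length_one, FreeMonoid.length_mul] at this
          cases w using FreeMonoid.casesOn with
          | one => exact hw rfl
          | of_mul x xs => rw [FreeMonoid.length_mul, FreeMonoid.length_of] at this; omega

/-- Induction principle: FL is generated by the generators. -/
lemma lie_induction (p : FL → Prop) (hgen : ∀ i, p (gen i))
    (hzero : p 0)
    (hadd : ∀ a b, p a → p b → p (a + b))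
    (hsmul : ∀ (c : ℂ) a, p a → p (c • a))
    (hlie : ∀ a b, p a → p b → p ⁅a, b⁆) : ∀ z, p z := by
  let S : LieSubalgebra ℂ FL :=
    { carrier := {z | p z}
      add_mem' := fun ha hb => hadd _ _ ha hb
      zero_mem' := hzero
      smul_mem' := fun c a ha => hsmul c a ha
      lie_mem' := fun ha hb => hlie _ _ ha hb }
  have hS : ∀ i, gen i ∈ S := hgen
  let g : FL →ₗ⁅ℂ⁆ S := FreeLieAlgebra.lift ℂ (fun i => ⟨gen i, hS i⟩)
  have key : S.incl.comp g = LieHom.id := by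
    apply FreeLieAlgebra.hom_ext
    intro x
    simp [g, FreeLieAlgebra.lift_of_apply, LieSubalgebra.incl]
    rfl
  intro z
  have : S.incl (g z) = z := by
    have h2 := congrArg (fun (f : FL →ₗ⁅ℂ⁆ FL) => f z) key
    simpa using h2
  rw [← this]
  exact (g z).2
lemma phi_theta (z : FL) :
    (φ z).coeff 1 = 0 ∧ ∀ p : A, θ (φ z * p) = ⁅z, θ p⁆ + (p.coeff 1) • θ (φ z) := by
  induction z using lie_induction with
  | hgen i =>
      constructor
      · rw [φ_gen]
        exact Finsupp.single_eq_of_ne' (FreeMonoid.of_ne_one i)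
      · intro p
        rw [φ_gen, theta_single_mul]
        simp [θword]
  | hzero => simp
  | hadd a b ha hb =>
      refine ⟨by rw [map_add φ, MonoidAlgebra.coeff_add, Finsupp.add_apply, ha.1, hb.1, add_zero], fun p => ?_⟩
      rw [map_add φ, add_mul, map_add, ha.2 p, hb.2 p, map_add θ, smul_add, add_lie]
      abel
  | hsmul c a ha =>
      refine ⟨by rw [map_smul φ, MonoidAlgebra.coeff_smul, Finsupp.smul_apply, ha.1, smul_zero], fun p => ?_⟩
      rw [map_smul φ, smul_mul_assoc, map_smul θ, ha.2 p, map_smul θ, smul_add,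
        smul_lie, smul_comm c (p.coeff 1)]
  | hlie a b ha hb =>
      have hbr : φ ⁅a, b⁆ = φ a * φ b - φ b * φ a := by
        rw [LieHom.map_lie, LieRing.of_associative_ring_bracket]
      have key : θ (φ ⁅a, b⁆) = ⁅a, θ (φ b)⁆ - ⁅b, θ (φ a)⁆ := by
        rw [hbr, map_sub]
        have h1 := ha.2 (φ b)
        have h2 := hb.2 (φ a)
        rw [h1, h2, ha.1, hb.1]
        simp
      constructor
      · rw [hbr, MonoidAlgebra.coeff_sub, Finsupp.sub_apply, coeff_one_mul, coeff_one_mul, ha.1, hb.1]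
        simp
      · intro p
        rw [key, hbr, sub_mul, map_sub, mul_assoc, mul_assoc, ha.2 (φ b * p), hb.2 (φ a * p),
          hb.2 p, ha.2 p, coeff_one_mul, coeff_one_mul, ha.1, hb.1]
        rw [lie_lie]
        simp only [zero_mul, zero_smul, add_zero, lie_add, lie_smul, smul_sub]
        abel

/-- The degree derivation of the free Lie algebra. -/
def D : Module.End ℂ FL := θ ∘ₗ φ.toLinearMap

@[simp] lemma D_gen (i : Fin 2) : D (gen i) = gen i := by
  simp [D, θword]

lemma D_lie (a b : FL) : D ⁅a, b⁆ = ⁅a, D b⁆ + ⁅D a, b⁆ := by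
  have hbr : φ ⁅a, b⁆ = φ a * φ b - φ b * φ a := by
    rw [LieHom.map_lie, LieRing.of_associative_ring_bracket]
  show θ (φ ⁅a, b⁆) = ⁅a, θ (φ b)⁆ + ⁅θ (φ a), b⁆
  rw [hbr, map_sub, (phi_theta a).2 (φ b), (phi_theta b).2 (φ a),
    (phi_theta a).1, (phi_theta b).1]
  simp only [zero_smul, add_zero]
  rw [← lie_skew b (θ (φ a))]
  abel

/-- Eigenspace of the degree derivation. -/
def V (k : ℕ) : Submodule ℂ FL := Module.End.eigenspace D (k : ℂ)

lemma mem_V {k : ℕ} {x : FL} : x ∈ V k ↔ D x = (k : ℂ) • x :=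
  Module.End.mem_eigenspace_iff

lemma gen_mem_V1 (i : Fin 2) : gen i ∈ V 1 := by rw [mem_V]; simp

lemma lie_mem_V {j k : ℕ} {a b : FL} (ha : a ∈ V j) (hb : b ∈ V k) :
    ⁅a, b⁆ ∈ V (j + k) := by
  rw [mem_V] at ha hb ⊢
  rw [D_lie, ha, hb, Nat.cast_add, add_smul, lie_smul, smul_lie]
  abel

/-- Span of bracket monomials of (mathematical) degree `k`. -/
def U : ℕ → Submodule ℂ FL
  | 0 => ⊥
  | 1 => Submodule.span ℂ (Set.range gen)
  | (k+2) => Submodule.span ℂ {m | ∃ i, ∃ b ∈ U (k+1), m = ⁅gen i, b⁆}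

lemma U_le_V : ∀ k, U k ≤ V k := by
  intro k
  induction k with
  | zero => exact bot_le
  | succ k ih =>
      cases k with
      | zero =>
          rw [U, Submodule.span_le]
          rintro x ⟨i, rfl⟩
          exact gen_mem_V1 i
      | succ k =>
          rw [U, Submodule.span_le]
          rintro x ⟨i, b, hb, rfl⟩
          have := lie_mem_V (gen_mem_V1 i) (ih hb)
          simpa [Nat.add_comm] using this

lemma U_le_lcs : ∀ k, U (k+1) ≤ (LieModule.lowerCentralSeries ℂ FL FL k).toSubmodule := by
  intro k
  induction k with
  | zero => simp [le_top]
  | succ k ih =>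
      rw [U, Submodule.span_le]
      rintro x ⟨i, b, hb, rfl⟩
      rw [SetLike.mem_coe, LieSubmodule.mem_toSubmodule, LieModule.lowerCentralSeries_succ]
      exact LieSubmodule.lie_mem_lie (LieSubmodule.mem_top _) (ih hb)

lemma lie_U_U : ∀ j k : ℕ, ∀ a ∈ U (j+1), ∀ b ∈ U (k+1), ⁅a, b⁆ ∈ U (j+k+2) := by
  intro j
  induction j with
  | zero =>
      intro k a ha b hb
      rw [show (0:ℕ)+k+2 = k+2 from by omega]
      induction ha using Submodule.span_induction with
      | mem x hx =>
          obtain ⟨i, rfl⟩ := hx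
          exact Submodule.subset_span ⟨i, b, hb, rfl⟩
      | zero => simp
      | add x y hx hy hx' hy' => rw [add_lie]; exact add_mem hx' hy'
      | smul c x hx hx' => rw [smul_lie]; exact Submodule.smul_mem _ _ hx'
  | succ j ihj =>
      intro k a ha b hb
      induction ha using Submodule.span_induction with
      | mem x hx =>
          obtain ⟨i, c, hc, rfl⟩ := hx
          rw [lie_lie]
          refine sub_mem ?_ ?_
          · have h1 : ⁅c, b⁆ ∈ U (j+k+2) := ihj k c hc b hb
            rw [show j+k+2 = j+1+k+1 from by omega] at h1
            exact Submodule.subset_span ⟨i, _, h1, rfl⟩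
          · have h2 : ⁅gen i, b⁆ ∈ U (k+2) := Submodule.subset_span ⟨i, b, hb, rfl⟩
            have h3 : ⁅c, ⁅gen i, b⁆⁆ ∈ U (j+(k+1)+2) := ihj (k+1) c hc _ h2
            have he : j+(k+1)+2 = j+1+k+2 := by omega
            rwa [he] at h3
      | zero => simp
      | add x y hx hy hx' hy' => rw [add_lie]; exact add_mem hx' hy'
      | smul c x hx hx' => rw [smul_lie]; exact Submodule.smul_mem _ _ hx'

lemma lie_U_U' {j k : ℕ} (hj : 1 ≤ j) (hk : 1 ≤ k) {a b : FL}
    (ha : a ∈ U j) (hb : b ∈ U k) : ⁅a, b⁆ ∈ U (j + k) := by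
  obtain ⟨j, rfl⟩ : ∃ j', j = j' + 1 := ⟨j - 1, by omega⟩
  obtain ⟨k, rfl⟩ : ∃ k', k = k' + 1 := ⟨k - 1, by omega⟩
  have h := lie_U_U j k a ha b hb
  have he : j + k + 2 = (j+1) + (k+1) := by omega
  rwa [he] at h

/-- The span of all bracket monomials. -/
def W : Submodule ℂ FL := ⨆ k, U (k+1)

lemma lie_mem_iSup {m : ℕ} {a b : FL} (ha : a ∈ W) (hb : b ∈ ⨆ k, U (m+k+1)) :
    ⁅a, b⁆ ∈ ⨆ k, U (m+k+2) := by
  induction ha using Submodule.iSup_induction' with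
  | mem j x hx =>
      induction hb using Submodule.iSup_induction' with
      | mem k y hy =>
          have h := lie_U_U' (by omega) (by omega) hx hy
          have he : (j+1) + (m+k+1) = m + (j+k) + 2 := by omega
          rw [he] at h
          exact Submodule.mem_iSup_of_mem (j+k) h
      | zero => simp
      | add y z hy hz hy' hz' => rw [lie_add]; exact add_mem hy' hz'
  | zero => simp
  | add x y hx hy hx' hy' => rw [add_lie]; exact add_mem hx' hy'

lemma mem_W (z : FL) : z ∈ W := by
  induction z using lie_induction with
  | hgen i =>
      refine Submodule.mem_iSup_of_mem 0 ?_
      rw [U]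
      exact Submodule.subset_span ⟨i, rfl⟩
  | hzero => exact zero_mem _
  | hadd a b ha hb => exact add_mem ha hb
  | hsmul c a ha => exact Submodule.smul_mem _ _ ha
  | hlie a b ha hb =>
      have hb' : b ∈ ⨆ k, U (0+k+1) := by simpa [W] using hb
      have h := lie_mem_iSup ha hb'
      have hle : (⨆ k, U (0+k+2)) ≤ W := by
        refine iSup_le fun k => ?_
        have : (0+k+2) = (k+1)+1 := by omega
        rw [this]
        exact le_iSup (fun n => U (n+1)) (k+1)
      exact hle h

lemma lcs_le_iSup : ∀ t, (LieModule.lowerCentralSeries ℂ FL FL t).toSubmodule ≤ ⨆ k, U (t+k+1) := by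
  intro t
  induction t with
  | zero =>
      intro x _
      simpa [W] using mem_W x
  | succ t ih =>
      rw [LieModule.lowerCentralSeries_succ, LieSubmodule.lieIdeal_oper_eq_linear_span']
      refine Submodule.span_le.mpr ?_
      rintro m ⟨x, -, n, hn, rfl⟩
      have hn' : n ∈ ⨆ k, U (t+k+1) := ih hn
      have h2 := lie_mem_iSup (mem_W x) hn'
      have hle : (⨆ k, U (t+k+2)) ≤ ⨆ k, U (t+1+k+1) := by
        refine iSup_le fun k => ?_
        have : t+k+2 = t+1+k+1 := by omega
        rw [this]
        exact le_iSup (fun n => U (t+1+n+1)) k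
      exact hle h2

lemma indep_sum_zero (s : Finset ℕ) (v : ℕ → FL) (hv : ∀ n ∈ s, v n ∈ V n)
    (h : ∑ n ∈ s, v n = 0) : ∀ n ∈ s, v n = 0 := by
  intro n hn
  have indep : iSupIndep V :=
    (Module.End.eigenspaces_iSupIndep D).comp (Nat.cast_injective)
  have hdisj : Disjoint (V n) (⨆ j, ⨆ (_ : j ≠ n), V j) := iSupIndep_def.mp indep n
  have h1 : v n = - ∑ m ∈ s.erase n, v m := by
    have he := Finset.add_sum_erase s v hn
    rw [← he] at h
    rw [add_eq_zero_iff_eq_neg] at h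
    exact h
  have h2 : v n ∈ ⨆ j, ⨆ (_ : j ≠ n), V j := by
    rw [h1]
    refine neg_mem (Submodule.sum_mem _ fun m hm => ?_)
    have hmn : m ≠ n := Finset.ne_of_mem_erase hm
    exact Submodule.mem_iSup_of_mem m (Submodule.mem_iSup_of_mem hmn (hv m (Finset.mem_of_mem_erase hm)))
  have := hdisj.le_bot (Submodule.mem_inf.mpr ⟨hv n hn, h2⟩)
  simpa using this

lemma exists_ne_fin2 (x : Fin 2) : ∃ j : Fin 2, j ≠ x := by
  fin_cases x
  · exact ⟨1, by decide⟩
  · exact ⟨0, by decide⟩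

/-- An element of the monoid algebra commuting with both generators is a scalar. -/
lemma comm_scalar (P : A)
    (hP : ∀ i : Fin 2, P * MonoidAlgebra.single (FreeMonoid.of i) 1 =
      MonoidAlgebra.single (FreeMonoid.of i) 1 * P) :
    P = MonoidAlgebra.single 1 (P.coeff 1) := by
  ext w
  by_cases hw : w = 1
  · subst hw; simp
  · rw [MonoidAlgebra.coeff_single, Finsupp.single_eq_of_ne' (Ne.symm hw)]
    cases w using FreeMonoid.casesOn with
    | one => exact absurd rfl hw
    | of_mul x xs =>
        obtain ⟨j, hj⟩ := exists_ne_fin2 x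
        have hleft : ((P * MonoidAlgebra.single (FreeMonoid.of j) 1 : A)).coeff
            ((FreeMonoid.of x * xs) * FreeMonoid.of j) = P.coeff (FreeMonoid.of x * xs) * 1 := by
          refine MonoidAlgebra.mul_single_apply_aux (x := P) _ ?_
          intro a _
          constructor
          · intro h; exact mul_right_cancel h
          · rintro rfl; rfl
        have hright : ((MonoidAlgebra.single (FreeMonoid.of j) 1 * P : A)).coeff
            ((FreeMonoid.of x * xs) * FreeMonoid.of j) = 0 := by
          refine MonoidAlgebra.single_mul_apply_of_not_exists_mul _ _ ?_
          rintro ⟨d, hd⟩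
          have := congrArg FreeMonoid.toList hd
          rw [FreeMonoid.toList_mul, FreeMonoid.toList_mul, FreeMonoid.toList_of_mul,
            FreeMonoid.toList_of] at this
          have hx : x = j := by
            have := congrArg (fun l => l.head?) this
            simpa using this
          exact hj hx.symm
        rw [hP j, hright] at hleft
        rw [mul_one] at hleft
        exact hleft.symm

lemma sum_lie' (s : Finset ℕ) (f : ℕ → FL) (m : FL) :
    ⁅∑ k ∈ s, f k, m⁆ = ∑ k ∈ s, ⁅f k, m⁆ :=
  map_sum (AddMonoidHom.mk' (fun z => ⁅z, m⁆) (fun a b => add_lie a b m)) f s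

/-- Core lemma: an element whose brackets with the generators lie in `L^{t+1}`
lies in `L^t`. -/
lemma core (t : ℕ) (ht : 2 ≤ t) (Z : FL)
    (hZ : ∀ i : Fin 2, ⁅Z, gen i⁆ ∈ LieModule.lowerCentralSeries ℂ FL FL t) :
    Z ∈ LieModule.lowerCentralSeries ℂ FL FL (t-1) := by
  obtain ⟨c, hc, hcsum⟩ := (Submodule.mem_iSup_iff_exists_finsupp _ _).mp (mem_W Z)
  -- brackets of low-degree components with generators vanish
  have hbr : ∀ k, k + 2 ≤ t → ∀ i : Fin 2, ⁅c k, gen i⁆ = 0 := by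
    intro k hk i
    by_cases hks : k ∈ c.support
    swap
    · rw [Finsupp.notMem_support_iff.mp hks, zero_lie]
    obtain ⟨d, hd, hdsum⟩ := (Submodule.mem_iSup_iff_exists_finsupp _ _).mp
      ((lcs_le_iSup t) (hZ i))
    set s : Finset ℕ := (c.support.image (· + 2)) ∪ (d.support.image (· + (t+1))) with hs
    set v : ℕ → FL := fun n =>
      (if h : 2 ≤ n then ⁅c (n-2), gen i⁆ else 0) -
      (if t+1 ≤ n then d (n-(t+1)) else 0) with hv
    have hvV : ∀ n ∈ s, v n ∈ V n := by
      intro n _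
      refine sub_mem ?_ ?_
      · by_cases h2 : 2 ≤ n
        · rw [dif_pos h2]
          have h3 := lie_mem_V (U_le_V _ (hc (n-2))) (gen_mem_V1 i)
          have he : (n-2+1) + 1 = n := by omega
          rwa [he] at h3
        · rw [dif_neg h2]; exact zero_mem _
      · by_cases h2 : t+1 ≤ n
        · rw [if_pos h2]
          have h3 := U_le_V _ (hd (n-(t+1)))
          have he : t + (n-(t+1)) + 1 = n := by omega
          rwa [he] at h3
        · rw [if_neg h2]; exact zero_mem _
    have hZc : ∑ k ∈ c.support, c k = Z := by rw [← hcsum]; rfl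
    have hZd : ∑ k ∈ d.support, d k = ⁅Z, gen i⁆ := by rw [← hdsum]; rfl
    have hsum : ∑ n ∈ s, v n = 0 := by
      have hA : ∑ n ∈ s, (if h : 2 ≤ n then ⁅c (n-2), gen i⁆ else 0) = ⁅Z, gen i⁆ := by
        rw [← Finset.sum_subset (Finset.subset_union_left (s₂ := d.support.image (· + (t+1))))]
        · rw [Finset.sum_image (fun a _ b _ h => by omega)]
          have : ∀ k ∈ c.support, (if h : 2 ≤ k + 2 then ⁅c (k+2-2), gen i⁆ else 0)
              = ⁅c k, gen i⁆ := by
            intro k _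
            rw [dif_pos (by omega)]
            congr 1
          rw [Finset.sum_congr rfl this, ← sum_lie', hZc]
        · intro n _ hn
          by_cases h2 : 2 ≤ n
          · rw [dif_pos h2]
            have : c (n-2) = 0 := by
              by_contra hne
              exact hn (Finset.mem_image.mpr ⟨n-2, Finsupp.mem_support_iff.mpr hne, by omega⟩)
            rw [this, zero_lie]
          · rw [dif_neg h2]
      have hB : ∑ n ∈ s, (if t+1 ≤ n then d (n-(t+1)) else 0) = ⁅Z, gen i⁆ := by
        rw [← Finset.sum_subset (Finset.subset_union_right (s₁ := c.support.image (· + 2)))]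
        · rw [Finset.sum_image (fun a _ b _ h => by omega)]
          have : ∀ k ∈ d.support, (if t+1 ≤ k + (t+1) then d (k+(t+1)-(t+1)) else 0)
              = d k := by
            intro k _
            rw [if_pos (by omega)]
            congr 1
            omega
          rw [Finset.sum_congr rfl this, hZd]
        · intro n _ hn
          by_cases h2 : t+1 ≤ n
          · rw [if_pos h2]
            by_contra hne
            exact hn (Finset.mem_image.mpr ⟨n-(t+1), Finsupp.mem_support_iff.mpr hne, by omega⟩)
          · rw [if_neg h2]
      simp only [hv]
      rw [Finset.sum_sub_distrib]
      rw [hA, hB, sub_self]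
    have hmem : (k+2) ∈ s := Finset.mem_union_left _
      (Finset.mem_image.mpr ⟨k, hks, rfl⟩)
    have hzero := indep_sum_zero s v hvV hsum (k+2) hmem
    simp only [hv, dif_pos (show 2 ≤ k+2 by omega), if_neg (show ¬ t+1 ≤ k+2 by omega),
      sub_zero, Nat.add_sub_cancel] at hzero
    exact hzero
  -- low-degree components vanish entirely
  have hcomp : ∀ k, k + 2 ≤ t → c k = 0 := by
    intro k hk
    have hφ : ∀ i : Fin 2, φ (c k) * MonoidAlgebra.single (FreeMonoid.of i) 1 =
        MonoidAlgebra.single (FreeMonoid.of i) 1 * φ (c k) := by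
      intro i
      have h0 : φ ⁅c k, gen i⁆ = 0 := by rw [hbr k hk i, map_zero]
      rw [LieHom.map_lie, LieRing.of_associative_ring_bracket, φ_gen] at h0
      have := sub_eq_zero.mp h0
      exact this
    have hsc := comm_scalar (φ (c k)) hφ
    have hD0 : D (c k) = 0 := by
      show θ (φ (c k)) = 0
      rw [hsc, θ_single]
      show _ • θword [] = 0
      rw [θword]; simp
    have hDk : D (c k) = ((k+1 : ℕ) : ℂ) • c k := mem_V.mp (U_le_V _ (hc k))
    rw [hD0] at hDk
    have : ((k+1 : ℕ) : ℂ) ≠ 0 := Nat.cast_ne_zero.mpr (by omega)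
    exact (smul_eq_zero.mp hDk.symm).resolve_left this
  -- conclude
  rw [← hcsum]
  show (c.sum fun _ v => v) ∈ (LieModule.lowerCentralSeries ℂ FL FL (t-1)).toSubmodule
  refine Submodule.sum_mem _ fun k hk => ?_
  have hk2 : t - 1 ≤ k := by
    by_contra h
    exact Finsupp.mem_support_iff.mp hk (hcomp k (by omega))
  have hmem : c k ∈ LieModule.lowerCentralSeries ℂ FL FL k :=
    (LieSubmodule.mem_toSubmodule _).mp (U_le_lcs k (hc k))
  exact (LieModule.antitone_lowerCentralSeries ℂ FL FL hk2) hmem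

/-- The quotient projection as a Lie algebra morphism. -/
def π (t : ℕ) : FL →ₗ⁅ℂ⁆ n2 t :=
  { (LieSubmodule.toSubmodule (nIdeal t)).mkQ with
    map_lie' := fun {x y} => (LieSubmodule.Quotient.mk_bracket (I := nIdeal t) x y) }

lemma π_surj (t : ℕ) : Function.Surjective (π t) :=
  Submodule.Quotient.mk_surjective (LieSubmodule.toSubmodule (nIdeal t))

lemma π_eq_zero {t : ℕ} {x : FL} : π t x = 0 ↔ x ∈ nIdeal t := by
  change Submodule.Quotient.mk x = 0 ↔ _
  exact Submodule.Quotient.mk_eq_zero _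

end N2Aux

open N2Aux

/-- For every `t ≥ 2`, the center of `n_{2,t}` equals the `t`-th term of its lower
central series (its last nonzero term; Mathlib index `t - 1`). -/
theorem n2_center (t : ℕ) (ht : 2 ≤ t) :
    LieAlgebra.center ℂ (n2 t) = LieModule.lowerCentralSeries ℂ (n2 t) (n2 t) (t - 1) := by
  apply le_antisymm
  · intro z hz
    obtain ⟨Z, rfl⟩ := π_surj t z
    have hz' : ∀ x : n2 t, ⁅x, π t Z⁆ = 0 := (LieModule.mem_maxTrivSubmodule ℂ (n2 t) (n2 t) _).mp hz
    have hZ : ∀ i : Fin 2, ⁅Z, gen i⁆ ∈ LieModule.lowerCentralSeries ℂ FL FL t := by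
      intro i
      have h1 : π t ⁅gen i, Z⁆ = 0 := by
        rw [LieHom.map_lie]; exact hz' (π t (gen i))
      have h2 : ⁅gen i, Z⁆ ∈ nIdeal t := π_eq_zero.mp h1
      have h3 : ⁅Z, gen i⁆ = -⁅gen i, Z⁆ := by rw [← lie_skew]
      rw [h3]
      exact neg_mem h2
    have hcore := core t ht Z hZ
    rw [← LieIdeal.lowerCentralSeries_map_eq (t-1) (π_surj t)]
    exact LieIdeal.mem_map hcore
  · intro z hz
    obtain ⟨u, rfl⟩ : ∃ u, t = u + 1 := ⟨t-1, by omega⟩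
    rw [Nat.add_sub_cancel] at hz
    rw [LieAlgebra.center, LieModule.mem_maxTrivSubmodule]
    intro a
    have h1 : ⁅a, z⁆ ∈ LieModule.lowerCentralSeries ℂ (n2 (u+1)) (n2 (u+1)) (u+1) := by
      rw [LieModule.lowerCentralSeries_succ]
      exact LieSubmodule.lie_mem_lie (LieSubmodule.mem_top a) hz
    have h2 : LieModule.lowerCentralSeries ℂ (n2 (u+1)) (n2 (u+1)) (u+1) = ⊥ := by
      rw [← LieIdeal.lowerCentralSeries_map_eq (u+1) (π_surj (u+1)), eq_bot_iff,
        LieIdeal.map_le_iff_le_comap]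
      intro x hx
      rw [LieIdeal.mem_comap, LieSubmodule.mem_bot]
      exact π_eq_zero.mpr hx
    rw [h2] at h1
    exact (LieSubmodule.mem_bot _).mp h1
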